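/- Let (Ω, ℱ, P) be a probability space, (ℱ_t)_{t≥1} a filtration, ρ ∈ (0,1), A₃ ≥ 0, and let (Y_t)_{t≥1} be a sequence of nonnegative integrable adapted random variables and (b_t)_{t≥1} nonnegative random variables with b_t² integrable for each t. Suppose that for every t ≥ 1, E[Y_{t+1} ∣ ℱ_t] ≤ Y_t + A₃ Σ_{τ=1}^{t} ρ^{t−τ} (1/τ²) E[b_τ² ∣ ℱ_t] almost surely, and that Σ_{t=1}^∞ (1/t²) E[b_t²] < ∞. Then the sequence (Y_t) converges almost surely to a nonnegative random variable. -/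

import Mathlib

open MeasureTheory Filter

private lemma sum_Icc_one_eq (g : ℕ → ℝ) (n : ℕ) :
    ∑ t ∈ Finset.Icc 1 n, g t = ∑ k ∈ Finset.range n, g (k + 1) := by
  rw [← Finset.Ico_add_one_right_eq_Icc, Finset.sum_Ico_eq_sum_range]
  exact Finset.sum_congr rfl fun k _ => by rw [Nat.add_comm]

/-- Lemma 4.0 of the paper: if the nonnegative integrable adapted sequence `Y`
(the costs `J(𝒲^t)`) satisfies, for every `t ≥ 1`, the conditional inequality
`E[Y (t+1) ∣ ℱ t] ≤ Y t + A₃ ∑_{τ=1}^{t} ρ^(t-τ) (1/τ²) E[b τ ² ∣ ℱ t]` a.s.,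
and `∑_t (1/t²) E[b t ²] < ∞`, then `Y t` converges almost surely to a
nonnegative random variable. -/
theorem cost_sequence_converges
    {Ω : Type*} {mΩ : MeasurableSpace Ω} (μ : Measure Ω) [IsProbabilityMeasure μ]
    (ℱ : Filtration ℕ mΩ)
    (ρ A₃ : ℝ) (hρ : ρ ∈ Set.Ioo (0 : ℝ) 1) (hA₃ : 0 ≤ A₃)
    (Y : ℕ → Ω → ℝ) (b : ℕ → Ω → ℝ)
    (hY_adapted : Adapted ℱ Y)
    (hY_nonneg : ∀ t ω, 0 ≤ Y t ω)
    (hY_int : ∀ t, Integrable (Y t) μ)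
    (hb_nonneg : ∀ t ω, 0 ≤ b t ω)
    (hb_sq_int : ∀ t, Integrable (fun ω => (b t ω) ^ 2) μ)
    (hcond : ∀ t, 1 ≤ t → ∀ᵐ ω ∂μ, (μ[Y (t + 1)|ℱ t]) ω ≤ Y t ω +
      A₃ * ∑ τ ∈ Finset.Icc 1 t,
        ρ ^ (t - τ) * (1 / (τ : ℝ) ^ 2) * (μ[fun ω' => (b τ ω') ^ 2|ℱ t]) ω)
    (hsum : Summable fun t : ℕ => (1 / (t : ℝ) ^ 2) * ∫ ω, (b t ω) ^ 2 ∂μ) :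
    ∃ Ylim : Ω → ℝ, Measurable Ylim ∧ (∀ ω, 0 ≤ Ylim ω) ∧
      ∀ᵐ ω ∂μ, Tendsto (fun t => Y t ω) atTop (nhds (Ylim ω)) := by
  classical
  obtain ⟨hρ0, hρ1⟩ := hρ
  -- the error process
  set e : ℕ → Ω → ℝ := fun t ω => A₃ * ∑ τ ∈ Finset.Icc 1 t,
      ρ ^ (t - τ) * (1 / (τ : ℝ) ^ 2) * (μ[fun ω' => (b τ ω') ^ 2|ℱ t]) ω with he_def
  have he_meas : ∀ t, StronglyMeasurable[ℱ t] (e t) := fun t =>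
    (Finset.stronglyMeasurable_fun_sum _ fun τ _ =>
      stronglyMeasurable_condExp.const_mul _).const_mul _
  have he_int : ∀ t, Integrable (e t) μ := fun t =>
    (integrable_finset_sum _ fun τ _ => integrable_condExp.const_mul _).const_mul _
  have he_nonneg : ∀ t, 0 ≤ᵐ[μ] e t := by
    intro t
    have h : ∀ τ : ℕ, (0 : Ω → ℝ) ≤ᵐ[μ] μ[fun ω' => (b τ ω') ^ 2|ℱ t] := fun τ =>
      condExp_nonneg (Filter.Eventually.of_forall fun ω => sq_nonneg _)
    filter_upwards [ae_all_iff.2 h] with ω hω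
    have : (0 : ℝ) ≤ A₃ * ∑ τ ∈ Finset.Icc 1 t,
        ρ ^ (t - τ) * (1 / (τ : ℝ) ^ 2) * (μ[fun ω' => (b τ ω') ^ 2|ℱ t]) ω := by
      refine mul_nonneg hA₃ (Finset.sum_nonneg fun τ _ => ?_)
      exact mul_nonneg (mul_nonneg (pow_nonneg hρ0.le _) (by positivity)) (hω τ)
    exact this
  have he_intnn : ∀ t, 0 ≤ ∫ ω, e t ω ∂μ := fun t => integral_nonneg_of_ae (he_nonneg t)
  -- deterministic bounds
  set a : ℕ → ℝ := fun τ => (1 / (τ : ℝ) ^ 2) * ∫ ω, (b τ ω) ^ 2 ∂μ with ha_def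
  have ha_nonneg : ∀ τ, 0 ≤ a τ := fun τ =>
    mul_nonneg (by positivity) (integral_nonneg fun ω => sq_nonneg _)
  have ha_sum : Summable a := hsum
  have he_integral : ∀ t, ∫ ω, e t ω ∂μ = A₃ * ∑ τ ∈ Finset.Icc 1 t, ρ ^ (t - τ) * a τ := by
    intro t
    rw [he_def]
    rw [integral_const_mul, integral_finset_sum _ (fun τ _ => integrable_condExp.const_mul _)]
    congr 1
    refine Finset.sum_congr rfl fun τ _ => ?_
    rw [integral_const_mul, integral_condExp (ℱ.le t), mul_assoc]
  have hgeom : ∀ m : ℕ, ∑ k ∈ Finset.range m, ρ ^ k ≤ (1 - ρ)⁻¹ := fun m =>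
    le_trans ((summable_geometric_of_lt_one hρ0.le hρ1).sum_le_tsum _
      (fun k _ => pow_nonneg hρ0.le _))
      (tsum_geometric_of_lt_one hρ0.le hρ1).le
  set K : ℝ := A₃ * ((∑' τ, a τ) * (1 - ρ)⁻¹) with hK_def
  have hsub : (0:ℝ) < 1 - ρ := by linarith
  have hesum : ∀ n, ∑ t ∈ Finset.Icc 1 n, ∫ ω, e t ω ∂μ ≤ K := by
    intro n
    have h1 : ∑ t ∈ Finset.Icc 1 n, ∫ ω, e t ω ∂μ
        = A₃ * ∑ t ∈ Finset.Icc 1 n, ∑ τ ∈ Finset.Icc 1 t, ρ ^ (t - τ) * a τ := by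
      rw [Finset.mul_sum]; exact Finset.sum_congr rfl fun t _ => he_integral t
    have h2 : ∑ t ∈ Finset.Icc 1 n, ∑ τ ∈ Finset.Icc 1 t, ρ ^ (t - τ) * a τ
        = ∑ τ ∈ Finset.Icc 1 n, ∑ t ∈ Finset.Icc τ n, ρ ^ (t - τ) * a τ := by
      refine Finset.sum_comm' fun t τ => ?_
      simp only [Finset.mem_Icc]
      omega
    have h3 : ∀ τ ∈ Finset.Icc 1 n, ∑ t ∈ Finset.Icc τ n, ρ ^ (t - τ) * a τ
        ≤ (1 - ρ)⁻¹ * a τ := by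
      intro τ _
      have : ∑ t ∈ Finset.Icc τ n, ρ ^ (t - τ) = ∑ k ∈ Finset.range (n + 1 - τ), ρ ^ k := by
        rw [← Finset.Ico_add_one_right_eq_Icc, Finset.sum_Ico_eq_sum_range]
        exact Finset.sum_congr rfl fun k _ => by rw [Nat.add_sub_cancel_left]
      rw [← Finset.sum_mul, this]
      exact mul_le_mul_of_nonneg_right (hgeom _) (ha_nonneg τ)
    have h4 : ∑ τ ∈ Finset.Icc 1 n, (1 - ρ)⁻¹ * a τ ≤ (∑' τ, a τ) * (1 - ρ)⁻¹ := by
      rw [← Finset.mul_sum, mul_comm]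
      refine mul_le_mul_of_nonneg_right ?_ (by positivity)
      exact ha_sum.sum_le_tsum _ (fun τ _ => ha_nonneg τ)
    calc ∑ t ∈ Finset.Icc 1 n, ∫ ω, e t ω ∂μ
        = A₃ * ∑ τ ∈ Finset.Icc 1 n, ∑ t ∈ Finset.Icc τ n, ρ ^ (t - τ) * a τ := by rw [h1, h2]
      _ ≤ A₃ * ((∑' τ, a τ) * (1 - ρ)⁻¹) :=
          mul_le_mul_of_nonneg_left (le_trans (Finset.sum_le_sum h3) h4) hA₃
  have hK_nonneg : 0 ≤ K := le_trans (by simp) (hesum 0)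
  -- bound on ∫ Y
  have hY_bound : ∀ n, ∫ ω, Y (n + 1) ω ∂μ
      ≤ ∫ ω, Y 1 ω ∂μ + ∑ t ∈ Finset.Icc 1 n, ∫ ω, e t ω ∂μ := by
    intro n
    induction n with
    | zero => simp
    | succ n ih =>
      have h1 : ∫ ω, Y (n + 2) ω ∂μ = ∫ ω, (μ[Y (n + 2)|ℱ (n + 1)]) ω ∂μ :=
        (integral_condExp (ℱ.le (n + 1))).symm
      have h2 : ∫ ω, (μ[Y (n + 2)|ℱ (n + 1)]) ω ∂μ
          ≤ ∫ ω, (Y (n + 1) ω + e (n + 1) ω) ∂μ := by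
        refine integral_mono_ae integrable_condExp ((hY_int _).add (he_int _)) ?_
        filter_upwards [hcond (n + 1) (by omega)] with ω hω using hω
      have h3 : ∫ ω, (Y (n + 1) ω + e (n + 1) ω) ∂μ
          = ∫ ω, Y (n + 1) ω ∂μ + ∫ ω, e (n + 1) ω ∂μ :=
        integral_add (hY_int _) (he_int _)
      have h4 : ∑ t ∈ Finset.Icc 1 (n + 1), ∫ ω, e t ω ∂μ
          = ∑ t ∈ Finset.Icc 1 n, ∫ ω, e t ω ∂μ + ∫ ω, e (n + 1) ω ∂μ :=
        Finset.sum_Icc_succ_top (by omega) _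
      rw [h4]
      calc ∫ ω, Y (n + 1 + 1) ω ∂μ ≤ ∫ ω, Y (n + 1) ω ∂μ + ∫ ω, e (n + 1) ω ∂μ := by
            rw [show n + 1 + 1 = n + 2 from rfl, h1]; rw [h3] at h2; exact h2
        _ ≤ ∫ ω, Y 1 ω ∂μ + ∑ t ∈ Finset.Icc 1 n, ∫ ω, e t ω ∂μ + ∫ ω, e (n + 1) ω ∂μ := by
            linarith
        _ = _ := by ring
  -- the shifted filtration and the supermartingale
  set 𝒢 : Filtration ℕ mΩ :=
    ⟨fun n => ℱ (n + 1), fun i j h => ℱ.mono (by omega), fun n => ℱ.le _⟩ with h𝒢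
  set f : ℕ → Ω → ℝ := fun n ω => Y (n + 1) ω - ∑ s ∈ Finset.Icc 1 n, e s ω with hf_def
  have hG_meas : ∀ n, StronglyMeasurable[ℱ n] (fun ω => ∑ s ∈ Finset.Icc 1 n, e s ω) := by
    intro n
    refine Finset.stronglyMeasurable_fun_sum _ fun s hs => ?_
    exact (he_meas s).mono (ℱ.mono (by simp only [Finset.mem_Icc] at hs; omega))
  have hG_int : ∀ n, Integrable (fun ω => ∑ s ∈ Finset.Icc 1 n, e s ω) μ := fun n =>
    integrable_finset_sum _ fun s _ => he_int s
  have hf_adapted : StronglyAdapted 𝒢 f := fun n =>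
    (hY_adapted (n + 1)).stronglyMeasurable.sub ((hG_meas n).mono (ℱ.mono (Nat.le_succ n)))
  have hf_int : ∀ n, Integrable (f n) μ := fun n => (hY_int _).sub (hG_int n)
  have hstep : ∀ n, μ[f (n + 1)|𝒢 n] ≤ᵐ[μ] f n := by
    intro n
    have hmain : μ[f (n + 1)|𝒢 n] =ᵐ[μ]
        μ[Y (n + 2)|𝒢 n] - μ[(fun ω => ∑ s ∈ Finset.Icc 1 (n + 1), e s ω)|𝒢 n] :=
      condExp_sub (hY_int (n + 2)) (hG_int (n + 1)) _
    have hfix : μ[(fun ω => ∑ s ∈ Finset.Icc 1 (n + 1), e s ω)|𝒢 n]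
        = fun ω => ∑ s ∈ Finset.Icc 1 (n + 1), e s ω :=
      condExp_of_stronglyMeasurable (𝒢.le n) (hG_meas (n + 1)) (hG_int (n + 1))
    filter_upwards [hmain, hcond (n + 1) (by omega)] with ω h1 h2
    have h1' : (μ[f (n + 1)|𝒢 n]) ω
        = (μ[Y (n + 2)|𝒢 n]) ω - ∑ s ∈ Finset.Icc 1 (n + 1), e s ω := by
      rw [h1, Pi.sub_apply, hfix]
    have h2' : (μ[Y (n + 2)|𝒢 n]) ω ≤ Y (n + 1) ω + e (n + 1) ω := h2
    have hgsum : ∑ s ∈ Finset.Icc 1 (n + 1), e s ω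
        = ∑ s ∈ Finset.Icc 1 n, e s ω + e (n + 1) ω :=
      Finset.sum_Icc_succ_top (by omega) _
    show (μ[f (n + 1)|𝒢 n]) ω ≤ Y (n + 1) ω - ∑ s ∈ Finset.Icc 1 n, e s ω
    rw [h1', hgsum]
    linarith
  have hsuper : Supermartingale f 𝒢 μ := supermartingale_nat hf_adapted hf_int hstep
  -- L¹ boundedness
  set R : NNReal := (∫ ω, Y 1 ω ∂μ + K + K).toNNReal with hR_def
  have hf_bdd : ∀ n, eLpNorm (f n) 1 μ ≤ (R : ENNReal) := by
    intro n
    have hGY_int : Integrable (fun ω => Y (n + 1) ω + ∑ s ∈ Finset.Icc 1 n, e s ω) μ :=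
      (hY_int _).add (hG_int n)
    have hGY_nonneg : 0 ≤ᵐ[μ] fun ω => Y (n + 1) ω + ∑ s ∈ Finset.Icc 1 n, e s ω := by
      filter_upwards [ae_all_iff.2 he_nonneg] with ω hω
      exact add_nonneg (hY_nonneg _ ω) (Finset.sum_nonneg fun s _ => hω s)
    have hstep1 : eLpNorm (f n) 1 μ
        ≤ ∫⁻ ω, ENNReal.ofReal (Y (n + 1) ω + ∑ s ∈ Finset.Icc 1 n, e s ω) ∂μ := by
      rw [eLpNorm_one_eq_lintegral_enorm]
      refine lintegral_mono_ae ?_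
      filter_upwards [ae_all_iff.2 he_nonneg] with ω hω
      have hGnn : 0 ≤ ∑ s ∈ Finset.Icc 1 n, e s ω := Finset.sum_nonneg fun s _ => hω s
      have habs : |f n ω| ≤ Y (n + 1) ω + ∑ s ∈ Finset.Icc 1 n, e s ω := by
        have hYnn := hY_nonneg (n + 1) ω
        rw [abs_le]
        constructor
        · show -(Y (n + 1) ω + _) ≤ Y (n + 1) ω - _
          linarith
        · show Y (n + 1) ω - _ ≤ _
          linarith
      rw [Real.enorm_eq_ofReal_abs]
      exact ENNReal.ofReal_le_ofReal habs
    have hstep2 : ∫⁻ ω, ENNReal.ofReal (Y (n + 1) ω + ∑ s ∈ Finset.Icc 1 n, e s ω) ∂μ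
        = ENNReal.ofReal (∫ ω, (Y (n + 1) ω + ∑ s ∈ Finset.Icc 1 n, e s ω) ∂μ) :=
      (ofReal_integral_eq_lintegral_ofReal hGY_int hGY_nonneg).symm
    have hstep3 : ∫ ω, (Y (n + 1) ω + ∑ s ∈ Finset.Icc 1 n, e s ω) ∂μ
        ≤ ∫ ω, Y 1 ω ∂μ + K + K := by
      rw [integral_add (hY_int _) (hG_int n),
        integral_finset_sum _ (fun s _ => he_int s)]
      have := hY_bound n
      have := hesum n
      linarith
    calc eLpNorm (f n) 1 μ
        ≤ ENNReal.ofReal (∫ ω, (Y (n + 1) ω + ∑ s ∈ Finset.Icc 1 n, e s ω) ∂μ) := by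
          rw [← hstep2]; exact hstep1
      _ ≤ ENNReal.ofReal (∫ ω, Y 1 ω ∂μ + K + K) := ENNReal.ofReal_le_ofReal hstep3
      _ = (R : ENNReal) := rfl
  have hbdd' : ∀ n, eLpNorm ((-f) n) 1 μ ≤ (R : ENNReal) := fun n => by
    have : eLpNorm ((-f) n) 1 μ = eLpNorm (f n) 1 μ := by
      simpa using eLpNorm_neg (f n) 1 μ
    rw [this]; exact hf_bdd n
  have hconv := hsuper.neg.ae_tendsto_limitProcess hbdd'
  set glim : Ω → ℝ := 𝒢.limitProcess (-f) μ with hglim_def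
  have hglim_meas : Measurable glim :=
    Filtration.stronglyMeasurable_limit_process'.measurable
  -- almost sure convergence of the compensator
  have hemeas : ∀ s, Measurable (e s) := fun s =>
    (he_meas s).measurable.mono (ℱ.le s) le_rfl
  set EE : Ω → ENNReal := fun ω => ∑' k, ENNReal.ofReal (e (k + 1) ω) with hEE_def
  have hEE_meas : Measurable EE :=
    Measurable.ennreal_tsum fun k => (hemeas (k + 1)).ennreal_ofReal
  have hEsummable : Summable fun k => ∫ ω, e (k + 1) ω ∂μ := by
    refine summable_of_sum_range_le (c := K) (fun k => he_intnn _) fun n => ?_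
    rw [← sum_Icc_one_eq (fun t => ∫ ω, e t ω ∂μ) n]
    exact hesum n
  have hEE_lt_top : ∀ᵐ ω ∂μ, EE ω < ⊤ := by
    refine ae_lt_top hEE_meas ?_
    rw [lintegral_tsum fun k => ((hemeas (k + 1)).ennreal_ofReal).aemeasurable]
    have h : ∀ k : ℕ, ∫⁻ ω, ENNReal.ofReal (e (k + 1) ω) ∂μ
        = ENNReal.ofReal (∫ ω, e (k + 1) ω ∂μ) := fun k =>
      (ofReal_integral_eq_lintegral_ofReal (he_int _) (he_nonneg _)).symm
    simp_rw [h]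
    rw [← ENNReal.ofReal_tsum_of_nonneg (fun k => he_intnn _) hEsummable]
    exact ENNReal.ofReal_ne_top
  have hGconv : ∀ᵐ ω ∂μ,
      Tendsto (fun n => ∑ s ∈ Finset.Icc 1 n, e s ω) atTop (nhds ((EE ω).toReal)) := by
    filter_upwards [hEE_lt_top, ae_all_iff.2 he_nonneg] with ω hfin hpos
    have hsummable : Summable fun k => e (k + 1) ω := by
      refine summable_of_sum_range_le (c := (EE ω).toReal) (fun k => hpos _) fun n => ?_
      have h1 : (∑ k ∈ Finset.range n, ENNReal.ofReal (e (k + 1) ω)) ≤ EE ω :=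
        ENNReal.sum_le_tsum _
      have h2 : ∑ k ∈ Finset.range n, e (k + 1) ω
          = (∑ k ∈ Finset.range n, ENNReal.ofReal (e (k + 1) ω)).toReal := by
        rw [← ENNReal.ofReal_sum_of_nonneg fun s _ => hpos _,
          ENNReal.toReal_ofReal (Finset.sum_nonneg fun s _ => hpos _)]
      rw [h2]
      exact ENNReal.toReal_mono hfin.ne h1
    have hts : (EE ω).toReal = ∑' k, e (k + 1) ω := by
      rw [show EE ω = ∑' k, ENNReal.ofReal (e (k + 1) ω) from rfl,
        ← ENNReal.ofReal_tsum_of_nonneg (fun k => hpos _) hsummable,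
        ENNReal.toReal_ofReal (tsum_nonneg fun k => hpos _)]
    rw [hts]
    exact hsummable.hasSum.tendsto_sum_nat.congr
      fun n => (sum_Icc_one_eq (fun t => e t ω) n).symm
  -- assemble the limit
  refine ⟨fun ω => max ((EE ω).toReal - glim ω) 0,
    ((hEE_meas.ennreal_toReal.sub hglim_meas).max measurable_const),
    fun ω => le_max_right _ _, ?_⟩
  filter_upwards [hconv, hGconv] with ω h1 h2
  have hY' : Tendsto (fun n => Y (n + 1) ω) atTop (nhds ((EE ω).toReal - glim ω)) := by
    have key : ∀ n, Y (n + 1) ω = (∑ s ∈ Finset.Icc 1 n, e s ω) - (-f) n ω := by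
      intro n
      show Y (n + 1) ω
          = (∑ s ∈ Finset.Icc 1 n, e s ω) - -(Y (n + 1) ω - ∑ s ∈ Finset.Icc 1 n, e s ω)
      ring
    exact (h2.sub h1).congr fun n => (key n).symm
  have hnn : 0 ≤ (EE ω).toReal - glim ω :=
    ge_of_tendsto hY' (Eventually.of_forall fun n => hY_nonneg _ ω)
  rw [max_eq_left hnn]
  exact (tendsto_add_atTop_iff_nat 1).mp hY'
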